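/- Assume d and B are bounded by D and Lipschitz in their second variable with constant L, |ψ_j(x_i)| ≤ ψ_max, and the mesh coupling k = r·h² = λ·h with λ + 2r ≤ 1. Then there exist constants C > 0 and k_0 ∈ (0, 1/2), depending only on D, L, ψ_max, C_0, a_† and T (independent of h, k, n), with the following property: for all k ≤ k_0 and all V_h, W_h ∈ X_h whose components satisfy ‖V^n‖_∞ ≤ C_0 and ‖W^n‖_∞ ≤ C_0 for 0 ≤ n ≤ N, writing Φ_h(V_h) = (P_0, P^0, …, P^N, P_M) and Φ_h(W_h) = (R_0, R^0, …, R^N, R_M), one has for every 1 ≤ n ≤ N: ‖V^n − W^n‖² ≤ ((1 + Ck)/(1 − 2k))‖V^{n−1} − W^{n−1}‖² + (Ck/(1 − 2k))·(‖P^n − R^n‖² + |P_0^{n−1} − R_0^{n−1}|² + h|P_M^{n−1} − R_M^{n−1}|²). -/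

import Mathlib

open scoped BigOperators

noncomputable section

/-- Composite quadrature rule `Q_h`. -/
def Qh (h : ℝ) (M' : ℕ) (V : ℕ → ℝ) : ℝ :=
  (4*h/3) * (2*V 1 - V 2 + 2*V 3)
    + (h/3) * ∑ i ∈ Finset.Icc 2 M', (V (2*i) + 4*V (2*i+1) + V (2*i+2))
    + (4*h/3) * (2*V (2*M'+3) - V (2*M'+4) + 2*V (2*M'+5))

/-- `‖V‖² = Σ_{i=1}^{M-1} h |V_i|²`. -/
def normSq (h : ℝ) (M : ℕ) (V : ℕ → ℝ) : ℝ :=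
  ∑ i ∈ Finset.Icc 1 (M-1), h * (V i)^2

/-- `‖Z‖_*² = Σ_{n=0}^{N} k |Z^n|²`. -/
def starSq (k : ℝ) (N : ℕ) (Z : ℕ → ℝ) : ℝ :=
  ∑ n ∈ Finset.range (N+1), k * (Z n)^2

/-- The norm on `X_h`. -/
def XNorm (h k : ℝ) (M N : ℕ) (V0 : ℕ → ℝ) (V : ℕ → ℕ → ℝ) (VM : ℕ → ℝ) : ℝ :=
  h * (Real.sqrt (starSq k N V0) + Real.sqrt (starSq k N VM))
    + Finset.sup' (Finset.range (N+1)) ⟨0, Finset.mem_range.mpr (Nat.succ_pos N)⟩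
        (fun n => Real.sqrt (normSq h M (V n)))

/-- The square of the norm on `Y_h`. -/
def YNormSq (h k : ℝ) (M N : ℕ) (P0 : ℕ → ℝ) (P : ℕ → ℕ → ℝ) (PM : ℕ → ℝ) : ℝ :=
  starSq k N P0 + normSq h M (P 0) + h * starSq k N PM
    + ∑ n ∈ Finset.Icc 1 N, k * normSq h M (P n)

/-- Extension of an interior vector by the boundary entries. -/
def extV (M : ℕ) (V0 : ℕ → ℝ) (V : ℕ → ℕ → ℝ) (VM : ℕ → ℝ) (n i : ℕ) : ℝ :=
  if i = 0 then V0 n else if i = M then VM n else V n i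

/-- Boundary component `P_0^n` of `Φ_h`. -/
def phiP0 (h : ℝ) (M' : ℕ) (B : ℝ → ℝ → ℝ) (ψ2 : ℝ → ℝ)
    (V0 : ℕ → ℝ) (V : ℕ → ℕ → ℝ) (n : ℕ) : ℝ :=
  (1 + 1/h) * V0 n - (1/h) * V n 1
    - Qh h M' (fun i => B ((i:ℝ)*h) (Qh h M' (fun j => ψ2 ((j:ℝ)*h) * V n j)) * V n i)

/-- Boundary component `P_M^n` of `Φ_h`. -/
def phiPM (h : ℝ) (VM : ℕ → ℝ) (n : ℕ) : ℝ := VM n / h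

/-- Interior component `P_i^n` (for `1 ≤ n ≤ N`) of `Φ_h`. -/
def phiPi (h k : ℝ) (M' : ℕ) (d : ℝ → ℝ → ℝ) (ψ1 : ℝ → ℝ)
    (V0 : ℕ → ℝ) (V : ℕ → ℕ → ℝ) (VM : ℕ → ℝ) (n i : ℕ) : ℝ :=
  (V n i - V (n-1) i)/k
    + (extV (2*(M'+3)) V0 V VM (n-1) i - extV (2*(M'+3)) V0 V VM (n-1) (i-1))/h
    + d ((i:ℝ)*h) (Qh h M' (fun j => ψ1 ((j:ℝ)*h) * V (n-1) j)) * V (n-1) i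
    - (extV (2*(M'+3)) V0 V VM (n-1) (i+1) + extV (2*(M'+3)) V0 V VM (n-1) (i-1)
        - 2 * V (n-1) i)/h^2

/-- Interior component `P_i^n` of `Φ_h`, for all `0 ≤ n ≤ N`. -/
def phiP (h k : ℝ) (M' : ℕ) (d : ℝ → ℝ → ℝ) (ψ1 u0 : ℝ → ℝ)
    (V0 : ℕ → ℝ) (V : ℕ → ℕ → ℝ) (VM : ℕ → ℝ) (n i : ℕ) : ℝ :=
  if n = 0 then V 0 i - u0 ((i:ℝ)*h) else phiPi h k M' d ψ1 V0 V VM n i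

lemma qh_sub (h : ℝ) (M' : ℕ) (f g : ℕ → ℝ) :
    Qh h M' f - Qh h M' g = Qh h M' (fun i => f i - g i) := by
  have hs : ∑ i ∈ Finset.Icc 2 M', (f (2*i) + 4*f (2*i+1) + f (2*i+2))
      - ∑ i ∈ Finset.Icc 2 M', (g (2*i) + 4*g (2*i+1) + g (2*i+2))
      = ∑ i ∈ Finset.Icc 2 M',
          (f (2*i) - g (2*i) + 4*(f (2*i+1) - g (2*i+1)) + (f (2*i+2) - g (2*i+2))) := by
    rw [← Finset.sum_sub_distrib]
    exact Finset.sum_congr rfl fun i _ => by ring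
  simp only [Qh]
  rw [← hs]
  ring

lemma row_step (a b c k x y z g X : ℝ) (ha : 0 ≤ a) (hb : 0 ≤ b) (hc : 0 ≤ c)
    (habc : a + b + c = 1) (hk : 0 < k)
    (hX : X = a*x + b*y + c*z + k*g) :
    X^2 ≤ (1+k)*(a*x^2 + b*y^2 + c*z^2) + k*(1+k)*g^2 := by
  subst hX
  have h1 : (a*x + b*y + c*z)^2 ≤ a*x^2 + b*y^2 + c*z^2 := by
    nlinarith [mul_nonneg (mul_nonneg ha hb) (sq_nonneg (x-y)),
      mul_nonneg (mul_nonneg ha hc) (sq_nonneg (x-z)),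
      mul_nonneg (mul_nonneg hb hc) (sq_nonneg (y-z))]
  nlinarith [mul_nonneg hk.le (sq_nonneg (a*x + b*y + c*z - g)), hk.le]

lemma bnd0 (h lam r e0 e1 Y : ℝ) (hh : 0 < h) (hr : 0 ≤ r) (hlam : lam = r*h)
    (he : (h+1)*e0 = e1 + h*Y) : (lam + r)*e0^2 ≤ r*e1^2 + lam*Y^2 := by
  subst hlam
  have hpos : (0:ℝ) < h + 1 := by linarith
  rw [← mul_le_mul_iff_of_pos_right hpos]
  have h2 : r*((h+1)*e0)^2 = r*(e1 + h*Y)^2 := by rw [he]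
  nlinarith [mul_nonneg (mul_nonneg hr hh.le) (sq_nonneg (e1 - Y))]

lemma sum_shift_down (f : ℕ → ℝ) (b : ℕ) (hb : 1 ≤ b) :
    ∑ i ∈ Finset.Icc 1 b, f (i-1) = ∑ j ∈ Finset.Icc 0 (b-1), f j := by
  exact Finset.sum_nbij' (fun i => i - 1) (fun j => j + 1)
    (fun a ha => by simp only [Finset.mem_Icc] at *; omega)
    (fun a ha => by simp only [Finset.mem_Icc] at *; omega)
    (fun a ha => by simp only [Finset.mem_Icc] at ha; show a - 1 + 1 = a; omega)
    (fun a ha => by simp only [Finset.mem_Icc] at ha; show a + 1 - 1 = a; omega)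
    (fun a ha => rfl)

lemma sum_shift_up (f : ℕ → ℝ) (b : ℕ) :
    ∑ i ∈ Finset.Icc 1 b, f (i+1) = ∑ j ∈ Finset.Icc 2 (b+1), f j := by
  exact Finset.sum_nbij' (fun i => i + 1) (fun j => j - 1)
    (fun a ha => by simp only [Finset.mem_Icc] at *; omega)
    (fun a ha => by simp only [Finset.mem_Icc] at *; omega)
    (fun a ha => by simp only [Finset.mem_Icc] at ha; show a + 1 - 1 = a; omega)
    (fun a ha => by simp only [Finset.mem_Icc] at ha; show a - 1 + 1 = a; omega)
    (fun a ha => rfl)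

lemma qh_abs (h : ℝ) (hh : 0 ≤ h) (M' : ℕ) (U : ℕ → ℝ) :
    |Qh h M' U| ≤ 16 * h * ∑ j ∈ Finset.Icc 1 (2*M'+5), |U j| := by
  set T := ∑ j ∈ Finset.Icc 1 (2*M'+5), |U j| with hT
  have hTnn : 0 ≤ T := Finset.sum_nonneg fun _ _ => abs_nonneg _
  have hmem : ∀ j, 1 ≤ j → j ≤ 2*M'+5 → |U j| ≤ T := fun j h1 h2 =>
    Finset.single_le_sum (f := fun j => |U j|) (fun _ _ => abs_nonneg _)
      (Finset.mem_Icc.mpr ⟨h1, h2⟩)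
  have hsub : ∀ g : ℕ → ℕ, (∀ i, 2 ≤ i → i ≤ M' → 1 ≤ g i ∧ g i ≤ 2*M'+5) →
      (∀ i i', g i = g i' → i = i') →
      ∑ i ∈ Finset.Icc 2 M', |U (g i)| ≤ T := by
    intro g hrange hinj
    have himg : ∑ i ∈ Finset.Icc 2 M', |U (g i)|
        = ∑ j ∈ (Finset.Icc 2 M').image g, |U j| :=
      (Finset.sum_image (s := Finset.Icc 2 M') (g := g) (f := fun j => |U j|) (fun x _ y _ hxy => hinj x y hxy)).symm
    rw [himg]
    apply Finset.sum_le_sum_of_subset_of_nonneg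
    · intro j hj
      simp only [Finset.mem_image, Finset.mem_Icc] at hj ⊢
      obtain ⟨i, ⟨h2, hM⟩, rfl⟩ := hj
      exact hrange i h2 hM
    · exact fun _ _ _ => abs_nonneg _
  have h1 : ∑ i ∈ Finset.Icc 2 M', |U (2*i)| ≤ T :=
    hsub (fun i => 2*i) (fun i h2 hM => by constructor <;> omega) (fun i i' e => by omega)
  have h2 : ∑ i ∈ Finset.Icc 2 M', |U (2*i+1)| ≤ T :=
    hsub (fun i => 2*i+1) (fun i h2 hM => by constructor <;> omega) (fun i i' e => by omega)
  have h3 : ∑ i ∈ Finset.Icc 2 M', |U (2*i+2)| ≤ T :=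
    hsub (fun i => 2*i+2) (fun i h2 hM => by constructor <;> omega) (fun i i' e => by omega)
  have hmid : |∑ i ∈ Finset.Icc 2 M', (U (2*i) + 4*U (2*i+1) + U (2*i+2))| ≤ 6*T := by
    calc |∑ i ∈ Finset.Icc 2 M', (U (2*i) + 4*U (2*i+1) + U (2*i+2))|
        ≤ ∑ i ∈ Finset.Icc 2 M', |U (2*i) + 4*U (2*i+1) + U (2*i+2)| :=
          Finset.abs_sum_le_sum_abs _ _
      _ ≤ ∑ i ∈ Finset.Icc 2 M', (|U (2*i)| + 4*|U (2*i+1)| + |U (2*i+2)|) := by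
          apply Finset.sum_le_sum; intro i _
          have := abs_add_le (U (2*i) + 4*U (2*i+1)) (U (2*i+2))
          have := abs_add_le (U (2*i)) (4*U (2*i+1))
          have h4 : |4*U (2*i+1)| = 4*|U (2*i+1)| := by
            rw [abs_mul]; norm_num
          linarith
      _ = (∑ i ∈ Finset.Icc 2 M', |U (2*i)|) + 4*(∑ i ∈ Finset.Icc 2 M', |U (2*i+1)|)
            + ∑ i ∈ Finset.Icc 2 M', |U (2*i+2)| := by
          rw [Finset.sum_add_distrib, Finset.sum_add_distrib, Finset.mul_sum]
      _ ≤ 6*T := by linarith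
  have hb1 : |2*U 1 - U 2 + 2*U 3| ≤ 5*T := by
    have e1 := hmem 1 (by omega) (by omega)
    have e2 := hmem 2 (by omega) (by omega)
    have e3 := hmem 3 (by omega) (by omega)
    have := abs_sub_abs_le_abs_sub (U 1) (U 2)
    calc |2*U 1 - U 2 + 2*U 3| ≤ |2*U 1 - U 2| + |2*U 3| := abs_add_le _ _
      _ ≤ |2*U 1| + |U 2| + |2*U 3| := by have := abs_sub (2*U 1) (U 2); linarith
      _ ≤ 5*T := by
          rw [abs_mul, abs_mul]
          simp only [abs_two]
          linarith
  have hb2 : |2*U (2*M'+3) - U (2*M'+4) + 2*U (2*M'+5)| ≤ 5*T := by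
    have e1 := hmem (2*M'+3) (by omega) (by omega)
    have e2 := hmem (2*M'+4) (by omega) (by omega)
    have e3 := hmem (2*M'+5) (by omega) (by omega)
    calc |2*U (2*M'+3) - U (2*M'+4) + 2*U (2*M'+5)|
        ≤ |2*U (2*M'+3) - U (2*M'+4)| + |2*U (2*M'+5)| := abs_add_le _ _
      _ ≤ |2*U (2*M'+3)| + |U (2*M'+4)| + |2*U (2*M'+5)| := by
          have := abs_sub (2*U (2*M'+3)) (U (2*M'+4)); linarith
      _ ≤ 5*T := by
          rw [abs_mul, abs_mul]
          simp only [abs_two]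
          linarith
  have hq : |Qh h M' U| ≤ (4*h/3)*(5*T) + (h/3)*(6*T) + (4*h/3)*(5*T) := by
    unfold Qh
    have t1 : |(4*h/3) * (2*U 1 - U 2 + 2*U 3)| ≤ (4*h/3)*(5*T) := by
      rw [abs_mul]
      apply mul_le_mul _ hb1 (abs_nonneg _) (by positivity)
      rw [abs_of_nonneg (by positivity)]
    have t2 : |(h/3) * ∑ i ∈ Finset.Icc 2 M', (U (2*i) + 4*U (2*i+1) + U (2*i+2))|
        ≤ (h/3)*(6*T) := by
      rw [abs_mul]
      apply mul_le_mul _ hmid (abs_nonneg _) (by positivity)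
      rw [abs_of_nonneg (by positivity)]
    have t3 : |(4*h/3) * (2*U (2*M'+3) - U (2*M'+4) + 2*U (2*M'+5))| ≤ (4*h/3)*(5*T) := by
      rw [abs_mul]
      apply mul_le_mul _ hb2 (abs_nonneg _) (by positivity)
      rw [abs_of_nonneg (by positivity)]
    calc |4*h/3 * (2*U 1 - U 2 + 2*U 3)
          + h/3 * ∑ i ∈ Finset.Icc 2 M', (U (2*i) + 4*U (2*i+1) + U (2*i+2))
          + 4*h/3 * (2*U (2*M'+3) - U (2*M'+4) + 2*U (2*M'+5))|
        ≤ |4*h/3 * (2*U 1 - U 2 + 2*U 3)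
          + h/3 * ∑ i ∈ Finset.Icc 2 M', (U (2*i) + 4*U (2*i+1) + U (2*i+2))|
          + |4*h/3 * (2*U (2*M'+3) - U (2*M'+4) + 2*U (2*M'+5))| := abs_add_le _ _
      _ ≤ _ := by
          have := abs_add_le (4*h/3 * (2*U 1 - U 2 + 2*U 3))
            (h/3 * ∑ i ∈ Finset.Icc 2 M', (U (2*i) + 4*U (2*i+1) + U (2*i+2)))
          have h43 : (4:ℝ)*h/3 = 4*h/3 := rfl
          linarith [t1, t2, t3]
  have : (4*h/3)*(5*T) + (h/3)*(6*T) + (4*h/3)*(5*T) ≤ 16*h*T := by nlinarith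
  linarith



lemma interior_identity (h k lam r : ℝ) (hh : h ≠ 0) (hk : k ≠ 0)
    (hk2 : k = lam*h) (hk1 : k = r*h^2)
    (Vn Vp Wn Wp Am Ap Bm Bp dV dW P R : ℝ)
    (hP : P = (Vn - Vp)/k + (Vp - Am)/h + dV - (Ap + Am - 2*Vp)/h^2)
    (hR : R = (Wn - Wp)/k + (Wp - Bm)/h + dW - (Bp + Bm - 2*Wp)/h^2) :
    Vn - Wn = (1-lam-2*r)*(Vp - Wp) + (lam+r)*(Am - Bm) + r*(Ap - Bp)
      + k*((P - R) - (dV - dW)) := by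
  subst hP hR
  have hlam : lam = k/h := by rw [hk2]; field_simp
  have hr : r = k/h^2 := by rw [hk1]; field_simp
  subst hlam hr
  field_simp
  ring

lemma two_sq_add (x y : ℝ) : (x+y)^2 ≤ 2*x^2 + 2*y^2 := by nlinarith [sq_nonneg (x-y)]

lemma two_sq_sub (x y : ℝ) : (x-y)^2 ≤ 2*x^2 + 2*y^2 := by nlinarith [sq_nonneg (x+y)]

lemma sq_le_sq_abs (x A : ℝ) (h : |x| ≤ A) : x^2 ≤ A^2 := by
  nlinarith [abs_nonneg x, sq_abs x]

set_option maxHeartbeats 1600000 in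
/-- One-step stability estimate: under boundedness and Lipschitz assumptions on `d` and `B`,
bounds on `ψ_j`, and the mesh coupling `k = r h² = λ h` with `λ + 2r ≤ 1`, there are
constants `C > 0` and `k₀ ∈ (0, 1/2)`, independent of `h, k, n`, such that for `k ≤ k₀`
and all `V_h, W_h ∈ X_h` with `‖Vⁿ‖_∞ ≤ C_0` and `‖Wⁿ‖_∞ ≤ C_0`, for every `1 ≤ n ≤ N`:
`‖Vⁿ - Wⁿ‖² ≤ ((1+Ck)/(1-2k)) ‖Vⁿ⁻¹ - Wⁿ⁻¹‖²
  + (Ck/(1-2k)) (‖Pⁿ - Rⁿ‖² + |P_0ⁿ⁻¹ - R_0ⁿ⁻¹|² + h |P_Mⁿ⁻¹ - R_Mⁿ⁻¹|²)`. -/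
theorem stmt_11 (adag T D L ψmax C0 : ℝ) (hadag : 0 < adag) (hT : 0 < T)
    (hD : 0 < D) (hL : 0 < L) (hψmax : 0 < ψmax) (hC0 : 0 < C0)
    (d B : ℝ → ℝ → ℝ) (ψ1 ψ2 u0 : ℝ → ℝ)
    (hdb : ∀ x ∈ Set.Icc 0 adag, ∀ s : ℝ, |d x s| ≤ D)
    (hBb : ∀ x ∈ Set.Icc 0 adag, ∀ s : ℝ, |B x s| ≤ D)
    (hdLip : ∀ x ∈ Set.Icc 0 adag, ∀ s s' : ℝ, |d x s - d x s'| ≤ L * |s - s'|)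
    (hBLip : ∀ x ∈ Set.Icc 0 adag, ∀ s s' : ℝ, |B x s - B x s'| ≤ L * |s - s'|)
    (hψ1 : ∀ x ∈ Set.Icc 0 adag, |ψ1 x| ≤ ψmax)
    (hψ2 : ∀ x ∈ Set.Icc 0 adag, |ψ2 x| ≤ ψmax) :
    ∃ C > 0, ∃ k₀ > 0, k₀ < 1/2 ∧
      ∀ M' N : ℕ, 0 < M' → 0 < N → ∀ r lam : ℝ, 0 < r → 0 < lam →
      let M := 2*(M'+3); let h := adag / (M : ℝ); let k := T / (N : ℝ);
      k = r * h^2 → k = lam * h → lam + 2*r ≤ 1 → k ≤ k₀ →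
      ∀ (V0 VM W0 WM : ℕ → ℝ) (V W : ℕ → ℕ → ℝ),
        (∀ n ≤ N, ∀ i, 1 ≤ i → i ≤ M-1 → |V n i| ≤ C0) →
        (∀ n ≤ N, ∀ i, 1 ≤ i → i ≤ M-1 → |W n i| ≤ C0) →
        ∀ n, 1 ≤ n → n ≤ N →
          normSq h M (fun i => V n i - W n i)
            ≤ ((1 + C*k)/(1 - 2*k)) * normSq h M (fun i => V (n-1) i - W (n-1) i)
              + (C*k/(1 - 2*k)) *
                (normSq h M (fun i =>
                    phiPi h k M' d ψ1 V0 V VM n i - phiPi h k M' d ψ1 W0 W WM n i)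
                  + (phiP0 h M' B ψ2 V0 V (n-1) - phiP0 h M' B ψ2 W0 W (n-1))^2
                  + h * (phiPM h VM (n-1) - phiPM h WM (n-1))^2) := by
  set C1 : ℝ := 16*D + 256*L*C0*ψmax*adag with hC1def
  set CQ2 : ℝ := 2*C1^2*adag with hCQ2def
  set Cd : ℝ := 2*D^2 + 512*L^2*C0^2*ψmax^2*adag^2 with hCddef
  have hC1nn : 0 ≤ C1 := by rw [hC1def]; positivity
  have hCQ2nn : 0 ≤ CQ2 := by rw [hCQ2def]; positivity
  have hCdnn : 0 ≤ Cd := by rw [hCddef]; positivity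
  refine ⟨5 + 4*CQ2 + 4*Cd, by positivity, 1/4, by norm_num, by norm_num, ?_⟩
  set C : ℝ := 5 + 4*CQ2 + 4*Cd with hCdef
  have hC5 : 5 ≤ C := by rw [hCdef]; linarith only [hCQ2nn, hCdnn]
  clear_value C1 CQ2 Cd C
  intro M' N hM' hN r lam hr hlam M h k hk1 hk2 hrl hk0
  intro V0 VM W0 WM V W hVb hWb n hn1 hnN
  have hMv : M = 2*(M'+3) := rfl
  have hM8 : 8 ≤ M := by omega
  have hMr : (0:ℝ) < (M:ℝ) := by exact_mod_cast Nat.pos_of_ne_zero (by omega)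
  have hh : 0 < h := div_pos hadag hMr
  have hNr : (0:ℝ) < (N:ℝ) := by exact_mod_cast hN
  have hk : 0 < k := div_pos hT hNr
  have hk4 : k ≤ 1/4 := hk0
  have hMh : (M:ℝ) * h = adag := by
    show (M:ℝ) * (adag / (M:ℝ)) = adag
    field_simp
  have phiPiV : ∀ i : ℕ, phiPi h k M' d ψ1 V0 V VM n i
      = (V n i - V (n-1) i)/k
        + (extV M V0 V VM (n-1) i - extV M V0 V VM (n-1) (i-1))/h
        + d ((i:ℝ)*h) (Qh h M' (fun j => ψ1 ((j:ℝ)*h) * V (n-1) j)) * V (n-1) i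
        - (extV M V0 V VM (n-1) (i+1) + extV M V0 V VM (n-1) (i-1)
            - 2 * V (n-1) i)/h^2 := fun i => rfl
  have phiPiW : ∀ i : ℕ, phiPi h k M' d ψ1 W0 W WM n i
      = (W n i - W (n-1) i)/k
        + (extV M W0 W WM (n-1) i - extV M W0 W WM (n-1) (i-1))/h
        + d ((i:ℝ)*h) (Qh h M' (fun j => ψ1 ((j:ℝ)*h) * W (n-1) j)) * W (n-1) i
        - (extV M W0 W WM (n-1) (i+1) + extV M W0 W WM (n-1) (i-1)
            - 2 * W (n-1) i)/h^2 := fun i => rfl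
  clear_value M h k
  have hlamr : lam = r * h := by
    have h1 : (r*h) * h = lam * h := by rw [← hk2, hk1]; ring
    exact (mul_right_cancel₀ hh.ne' h1).symm
  have ha : 0 ≤ 1 - lam - 2*r := by linarith only [hrl]
  have hb : 0 ≤ lam + r := by linarith only [hlam, hr]
  have habc : (1 - lam - 2*r) + (lam + r) + r = 1 := by ring
  have hx : ∀ i : ℕ, i ≤ M → ((i:ℝ)*h) ∈ Set.Icc 0 adag := by
    intro i hi
    constructor
    · exact mul_nonneg (Nat.cast_nonneg i) hh.le
    · rw [← hMh]
      apply mul_le_mul_of_nonneg_right _ hh.le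
      exact_mod_cast hi
  -- abbreviations
  set E : ℕ → ℝ := fun i => V (n-1) i - W (n-1) i with hEdef
  set Eh : ℕ → ℝ := fun j => extV M V0 V VM (n-1) j - extV M W0 W WM (n-1) j with hEhdef
  set sV : ℝ := Qh h M' (fun j : ℕ => ψ1 ((j:ℝ)*h) * V (n-1) j) with hsVdef
  set sW : ℝ := Qh h M' (fun j : ℕ => ψ1 ((j:ℝ)*h) * W (n-1) j) with hsWdef
  set Dd : ℕ → ℝ := fun i => d ((i:ℝ)*h) sV * V (n-1) i - d ((i:ℝ)*h) sW * W (n-1) i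
    with hDddef
  set DP : ℕ → ℝ := fun i =>
    phiPi h k M' d ψ1 V0 V VM n i - phiPi h k M' d ψ1 W0 W WM n i with hDPdef
  set G : ℕ → ℝ := fun i => DP i - Dd i with hGdef
  set DP0 : ℝ := phiP0 h M' B ψ2 V0 V (n-1) - phiP0 h M' B ψ2 W0 W (n-1) with hDP0def
  set DPM : ℝ := phiPM h VM (n-1) - phiPM h WM (n-1) with hDPMdef
  set sV2 : ℝ := Qh h M' (fun j : ℕ => ψ2 ((j:ℝ)*h) * V (n-1) j) with hsV2def
  set sW2 : ℝ := Qh h M' (fun j : ℕ => ψ2 ((j:ℝ)*h) * W (n-1) j) with hsW2def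
  set DQ : ℝ := Qh h M' (fun i : ℕ => B ((i:ℝ)*h) sV2 * V (n-1) i)
    - Qh h M' (fun i : ℕ => B ((i:ℝ)*h) sW2 * W (n-1) i) with hDQdef
  set Y : ℝ := DP0 + DQ with hYdef
  set T0 : ℝ := ∑ j ∈ Finset.Icc 1 (M-1), |E j| with hT0def
  set SQ : ℝ := ∑ j ∈ Finset.Icc 1 (M-1), (E j)^2 with hSQdef
  set NS : ℝ := normSq h M E with hNSdef
  set SDP : ℝ := normSq h M DP with hSDPdef
  set Sm : ℝ := ∑ i ∈ Finset.Icc 1 (M-1), h*(Eh (i-1))^2 with hSmdef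
  set Sp : ℝ := ∑ i ∈ Finset.Icc 1 (M-1), h*(Eh (i+1))^2 with hSpdef
  set SG : ℝ := ∑ i ∈ Finset.Icc 1 (M-1), h*(G i)^2 with hSGdef
  have hT0nn : 0 ≤ T0 := Finset.sum_nonneg fun _ _ => abs_nonneg _
  have hSQnn : 0 ≤ SQ := Finset.sum_nonneg fun _ _ => sq_nonneg _
  have hNS : NS = h * SQ := by
    rw [hNSdef, hSQdef, normSq, Finset.mul_sum]
  have hNSnn : 0 ≤ NS := by rw [hNS]; exact mul_nonneg hh.le hSQnn
  have hS0 : (∑ i ∈ Finset.Icc 1 (M-1), h*(E i)^2) = NS := by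
    rw [hNSdef]; rfl
  have hSDP0 : (∑ i ∈ Finset.Icc 1 (M-1), h*(DP i)^2) = SDP := by
    rw [hSDPdef]; rfl
  have hSDPnn : 0 ≤ SDP := by
    rw [← hSDP0]; exact Finset.sum_nonneg fun _ _ => mul_nonneg hh.le (sq_nonneg _)
  have hn1N : n - 1 ≤ N := by omega
  have hidx : 2*M'+5 = M-1 := by omega
  -- extension identities
  have heV : ∀ i, 1 ≤ i → i ≤ M-1 → extV M V0 V VM (n-1) i = V (n-1) i := by
    intro i h1 h2; unfold extV; rw [if_neg (by omega), if_neg (by omega)]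
  have heW : ∀ i, 1 ≤ i → i ≤ M-1 → extV M W0 W WM (n-1) i = W (n-1) i := by
    intro i h1 h2; unfold extV; rw [if_neg (by omega), if_neg (by omega)]
  have hEhE : ∀ i, 1 ≤ i → i ≤ M-1 → Eh i = E i := by
    intro i h1 h2
    rw [hEhdef]; simp only []; rw [heV i h1 h2, heW i h1 h2]
  -- Cauchy-Schwarz
  have hM1h : ((M-1:ℕ):ℝ) * h ≤ adag := by
    rw [← hMh]
    apply mul_le_mul_of_nonneg_right _ hh.le
    exact_mod_cast Nat.sub_le M 1
  have hCS : (h*T0)^2 ≤ adag * NS := by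
    have h1 : T0^2 ≤ ((M-1:ℕ):ℝ) * SQ := by
      have h2 := sq_sum_le_card_mul_sum_sq (s := Finset.Icc 1 (M-1))
        (f := fun j => |E j|)
      have h3 : ∑ j ∈ Finset.Icc 1 (M-1), |E j|^2 = SQ := by
        rw [hSQdef]; exact Finset.sum_congr rfl fun j _ => sq_abs _
      rw [h3] at h2
      have h4 : ((Finset.Icc 1 (M-1)).card : ℝ) = ((M-1:ℕ):ℝ) := by
        rw [Nat.card_Icc]; norm_num
      rw [← hT0def] at h2
      calc T0^2 ≤ ((Finset.Icc 1 (M-1)).card : ℝ) * SQ := h2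
        _ = ((M-1:ℕ):ℝ) * SQ := by rw [h4]
    have h2 : (h*T0)^2 = h^2 * T0^2 := by ring
    have h4 : h^2 * T0^2 ≤ h^2 * (((M-1:ℕ):ℝ) * SQ) :=
      mul_le_mul_of_nonneg_left h1 (by positivity)
    have h5 : h^2 * (((M-1:ℕ):ℝ) * SQ) = (((M-1:ℕ):ℝ)*h) * (h*SQ) := by ring
    have h6 : (((M-1:ℕ):ℝ)*h) * (h*SQ) ≤ adag * (h*SQ) :=
      mul_le_mul_of_nonneg_right hM1h (mul_nonneg hh.le hSQnn)
    rw [hNS]; linarith only [h1, h2, h4, h5, h6]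
  -- quadrature difference bounds
  have hpsiQ : ∀ ψ : ℝ → ℝ, (∀ x ∈ Set.Icc 0 adag, |ψ x| ≤ ψmax) →
      |Qh h M' (fun j : ℕ => ψ ((j:ℝ)*h) * V (n-1) j)
        - Qh h M' (fun j : ℕ => ψ ((j:ℝ)*h) * W (n-1) j)| ≤ 16*ψmax*(h*T0) := by
    intro ψ hψ
    rw [qh_sub]
    have hfun : (fun j : ℕ => ψ ((j:ℝ)*h) * V (n-1) j - ψ ((j:ℝ)*h) * W (n-1) j)
        = fun j : ℕ => ψ ((j:ℝ)*h) * E j := by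
      funext j; rw [hEdef]; ring
    rw [hfun]
    calc |Qh h M' (fun j : ℕ => ψ ((j:ℝ)*h) * E j)|
        ≤ 16*h*∑ j ∈ Finset.Icc 1 (2*M'+5), |ψ ((j:ℝ)*h) * E j| := qh_abs h hh.le M' _
      _ ≤ 16*h*(ψmax * T0) := by
          apply mul_le_mul_of_nonneg_left _ (by linarith only [hh.le] : (0:ℝ) ≤ 16*h)
          rw [hidx, hT0def, Finset.mul_sum]
          apply Finset.sum_le_sum
          intro j hj
          rw [Finset.mem_Icc] at hj
          rw [abs_mul]
          exact mul_le_mul_of_nonneg_right (hψ _ (hx j (by omega))) (abs_nonneg _)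
      _ = 16*ψmax*(h*T0) := by ring
  have hds : |sV - sW| ≤ 16*ψmax*(h*T0) := hpsiQ ψ1 hψ1
  have hds2 : |sV2 - sW2| ≤ 16*ψmax*(h*T0) := hpsiQ ψ2 hψ2
  -- bound on Dd entries
  have hDdbound : ∀ i, 1 ≤ i → i ≤ M-1 →
      |Dd i| ≤ D*|E i| + L*C0*(16*ψmax*(h*T0)) := by
    intro i h1 h2
    have hxi := hx i (by omega)
    have hW0 : |W (n-1) i| ≤ C0 := hWb (n-1) hn1N i h1 h2
    have hsplit : Dd i = d ((i:ℝ)*h) sV * E i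
        + (d ((i:ℝ)*h) sV - d ((i:ℝ)*h) sW) * W (n-1) i := by
      rw [hDddef, hEdef]; ring
    rw [hsplit]
    calc |d ((i:ℝ)*h) sV * E i + (d ((i:ℝ)*h) sV - d ((i:ℝ)*h) sW) * W (n-1) i|
        ≤ |d ((i:ℝ)*h) sV * E i| + |(d ((i:ℝ)*h) sV - d ((i:ℝ)*h) sW) * W (n-1) i| :=
          abs_add_le _ _
      _ ≤ D*|E i| + (L*|sV - sW|)*C0 := by
          rw [abs_mul, abs_mul]
          gcongr
          · exact hdb _ hxi _
          · exact hdLip _ hxi _ _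
      _ ≤ D*|E i| + L*C0*(16*ψmax*(h*T0)) := by
          have h7 := mul_le_mul_of_nonneg_left hds (mul_nonneg hL.le hC0.le)
          linarith only [h7]
  -- bound on DQ
  have hDQ : |DQ| ≤ C1*(h*T0) := by
    rw [hDQdef, qh_sub]
    have step : ∀ i, 1 ≤ i → i ≤ M-1 →
        |B ((i:ℝ)*h) sV2 * V (n-1) i - B ((i:ℝ)*h) sW2 * W (n-1) i|
          ≤ D*|E i| + L*C0*(16*ψmax*(h*T0)) := by
      intro i h1 h2
      have hxi := hx i (by omega)
      have hW0 : |W (n-1) i| ≤ C0 := hWb (n-1) hn1N i h1 h2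
      have hsplit : B ((i:ℝ)*h) sV2 * V (n-1) i - B ((i:ℝ)*h) sW2 * W (n-1) i
          = B ((i:ℝ)*h) sV2 * E i
            + (B ((i:ℝ)*h) sV2 - B ((i:ℝ)*h) sW2) * W (n-1) i := by
        rw [hEdef]; ring
      rw [hsplit]
      calc _ ≤ |B ((i:ℝ)*h) sV2 * E i|
            + |(B ((i:ℝ)*h) sV2 - B ((i:ℝ)*h) sW2) * W (n-1) i| := abs_add_le _ _
        _ ≤ D*|E i| + (L*|sV2 - sW2|)*C0 := by
            rw [abs_mul, abs_mul]
            gcongr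
            · exact hBb _ hxi _
            · exact hBLip _ hxi _ _
        _ ≤ D*|E i| + L*C0*(16*ψmax*(h*T0)) := by
            have h7 := mul_le_mul_of_nonneg_left hds2 (mul_nonneg hL.le hC0.le)
            linarith only [h7]
    calc |Qh h M' (fun i : ℕ =>
            B ((i:ℝ)*h) sV2 * V (n-1) i - B ((i:ℝ)*h) sW2 * W (n-1) i)|
        ≤ 16*h*∑ j ∈ Finset.Icc 1 (2*M'+5),
            |B ((j:ℝ)*h) sV2 * V (n-1) j - B ((j:ℝ)*h) sW2 * W (n-1) j| :=
          qh_abs h hh.le M' _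
      _ ≤ 16*h*∑ j ∈ Finset.Icc 1 (M-1), (D*|E j| + L*C0*(16*ψmax*(h*T0))) := by
          rw [hidx]
          apply mul_le_mul_of_nonneg_left _ (by linarith only [hh.le] : (0:ℝ) ≤ 16*h)
          apply Finset.sum_le_sum
          intro j hj
          rw [Finset.mem_Icc] at hj
          exact step j hj.1 hj.2
      _ ≤ C1*(h*T0) := by
          rw [Finset.sum_add_distrib, ← Finset.mul_sum, ← hT0def, Finset.sum_const,
            Nat.card_Icc, nsmul_eq_mul]
          have hcard : ((M - 1 + 1 - 1 : ℕ):ℝ) = ((M-1:ℕ):ℝ) := by norm_num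
          rw [hcard]
          have e1 : 16*h*(D*T0 + ((M-1:ℕ):ℝ)*(L*C0*(16*ψmax*(h*T0))))
              = 16*D*(h*T0) + 256*L*C0*ψmax*(((M-1:ℕ):ℝ)*h)*(h*T0) := by ring
          rw [e1, hC1def]
          have hhT0 : 0 ≤ h*T0 := mul_nonneg hh.le hT0nn
          have h8 := mul_le_mul_of_nonneg_right
            (mul_le_mul_of_nonneg_left hM1h
              (show (0:ℝ) ≤ 256*L*C0*ψmax by positivity)) hhT0
          linarith only [h8]
  -- key pointwise identity
  have key : ∀ i ∈ Finset.Icc 1 (M-1), V n i - W n i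
      = (1-lam-2*r)*(E i) + (lam+r)*(Eh (i-1)) + r*(Eh (i+1)) + k*(G i) := by
    intro i hi
    rw [Finset.mem_Icc] at hi
    have hPeq : phiPi h k M' d ψ1 V0 V VM n i
        = (V n i - V (n-1) i)/k
          + (V (n-1) i - extV M V0 V VM (n-1) (i-1))/h
          + (d ((i:ℝ)*h) sV * V (n-1) i)
          - (extV M V0 V VM (n-1) (i+1) + extV M V0 V VM (n-1) (i-1)
              - 2 * V (n-1) i)/h^2 := by
      rw [phiPiV i, heV i hi.1 hi.2, hsVdef]
    have hReq : phiPi h k M' d ψ1 W0 W WM n i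
        = (W n i - W (n-1) i)/k
          + (W (n-1) i - extV M W0 W WM (n-1) (i-1))/h
          + (d ((i:ℝ)*h) sW * W (n-1) i)
          - (extV M W0 W WM (n-1) (i+1) + extV M W0 W WM (n-1) (i-1)
              - 2 * W (n-1) i)/h^2 := by
      rw [phiPiW i, heW i hi.1 hi.2, hsWdef]
    have hid := interior_identity h k lam r hh.ne' hk.ne' hk2 hk1
      (V n i) (V (n-1) i) (W n i) (W (n-1) i)
      (extV M V0 V VM (n-1) (i-1)) (extV M V0 V VM (n-1) (i+1))
      (extV M W0 W WM (n-1) (i-1)) (extV M W0 W WM (n-1) (i+1))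
      (d ((i:ℝ)*h) sV * V (n-1) i) (d ((i:ℝ)*h) sW * W (n-1) i)
      (phiPi h k M' d ψ1 V0 V VM n i) (phiPi h k M' d ψ1 W0 W WM n i)
      hPeq hReq
    rw [hEdef, hEhdef, hGdef, hDPdef, hDddef]
    simp only []
    exact hid
  -- boundary identities
  have hEh0 : (h+1) * Eh 0 = E 1 + h*Y := by
    have e0 : Eh 0 = V0 (n-1) - W0 (n-1) := by
      rw [hEhdef]; simp only []; unfold extV; rw [if_pos rfl, if_pos rfl]
    have eP0 : DP0 = (1 + 1/h) * (V0 (n-1) - W0 (n-1)) - (1/h)*(E 1) - DQ := by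
      rw [hDP0def, hDQdef, hEdef]
      show (1 + 1/h) * V0 (n-1) - (1/h) * V (n-1) 1 - _
          - ((1 + 1/h) * W0 (n-1) - (1/h) * W (n-1) 1 - _) = _
      rw [← hsV2def, ← hsW2def]
      ring
    rw [hYdef, e0, eP0]
    field_simp
    ring
  have hEhM : Eh M = h * DPM := by
    rw [hEhdef, hDPMdef]
    simp only []
    unfold extV phiPM
    rw [if_neg (by omega), if_pos rfl, if_neg (by omega), if_pos rfl]
    field_simp
  -- row-wise estimate
  have step1 : ∀ i ∈ Finset.Icc 1 (M-1),
      h*(V n i - W n i)^2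
        ≤ (1+k)*((1-lam-2*r)*(h*(E i)^2) + (lam+r)*(h*(Eh (i-1))^2)
            + r*(h*(Eh (i+1))^2))
          + k*(1+k)*(h*(G i)^2) := by
    intro i hi
    have hrow := row_step (1-lam-2*r) (lam+r) r k (E i) (Eh (i-1)) (Eh (i+1)) (G i)
      (V n i - W n i) ha hb hr.le habc hk (key i hi)
    calc h*(V n i - W n i)^2
        ≤ h*((1+k)*((1-lam-2*r)*(E i)^2 + (lam+r)*(Eh (i-1))^2 + r*(Eh (i+1))^2)
            + k*(1+k)*(G i)^2) := mul_le_mul_of_nonneg_left hrow hh.le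
      _ = (1+k)*((1-lam-2*r)*(h*(E i)^2) + (lam+r)*(h*(Eh (i-1))^2)
            + r*(h*(Eh (i+1))^2)) + k*(1+k)*(h*(G i)^2) := by ring
  -- summation
  have sum1 : normSq h M (fun i => V n i - W n i)
      ≤ (1+k)*((1-lam-2*r)*NS + (lam+r)*Sm + r*Sp) + k*(1+k)*SG := by
    have h1 : normSq h M (fun i => V n i - W n i)
        ≤ ∑ i ∈ Finset.Icc 1 (M-1),
          ((1+k)*((1-lam-2*r)*(h*(E i)^2) + (lam+r)*(h*(Eh (i-1))^2)
              + r*(h*(Eh (i+1))^2))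
            + k*(1+k)*(h*(G i)^2)) := by
      unfold normSq
      exact Finset.sum_le_sum step1
    refine h1.trans (le_of_eq ?_)
    have e2 : ∀ (cc : ℝ) (f : ℕ → ℝ), ∑ i ∈ Finset.Icc 1 (M-1), cc * f i
        = cc * ∑ i ∈ Finset.Icc 1 (M-1), f i := fun cc f => (Finset.mul_sum _ _ _).symm
    calc ∑ i ∈ Finset.Icc 1 (M-1),
          ((1+k)*((1-lam-2*r)*(h*(E i)^2) + (lam+r)*(h*(Eh (i-1))^2)
              + r*(h*(Eh (i+1))^2))
            + k*(1+k)*(h*(G i)^2))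
        = ∑ i ∈ Finset.Icc 1 (M-1), (((1+k)*(1-lam-2*r))*(h*(E i)^2))
          + (∑ i ∈ Finset.Icc 1 (M-1), (((1+k)*(lam+r))*(h*(Eh (i-1))^2))
          + (∑ i ∈ Finset.Icc 1 (M-1), (((1+k)*r)*(h*(Eh (i+1))^2))
          + ∑ i ∈ Finset.Icc 1 (M-1), ((k*(1+k))*(h*(G i)^2)))) := by
          rw [← Finset.sum_add_distrib, ← Finset.sum_add_distrib,
            ← Finset.sum_add_distrib]
          exact Finset.sum_congr rfl fun i _ => by ring
      _ = (1+k)*((1-lam-2*r)*NS + (lam+r)*Sm + r*Sp) + k*(1+k)*SG := by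
          rw [e2 ((1+k)*(1-lam-2*r)) (fun i => h*(E i)^2),
            e2 ((1+k)*(lam+r)) (fun i => h*(Eh (i-1))^2),
            e2 ((1+k)*r) (fun i => h*(Eh (i+1))^2),
            e2 (k*(1+k)) (fun i => h*(G i)^2),
            hS0, ← hSmdef, ← hSpdef, ← hSGdef]
          ring
  -- shifted sums
  have hSm : Sm = h*(Eh 0)^2 + ∑ j ∈ Finset.Icc 1 (M-2), h*(E j)^2 := by
    rw [hSmdef, sum_shift_down (fun j => h*(Eh j)^2) (M-1) (by omega)]
    rw [show M-1-1 = M-2 by omega]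
    rw [show Finset.Icc 0 (M-2) = insert 0 (Finset.Icc 1 (M-2)) from by
      ext x; simp only [Finset.mem_Icc, Finset.mem_insert]; omega]
    rw [Finset.sum_insert (by simp)]
    congr 1
    exact Finset.sum_congr rfl fun j hj => by
      rw [Finset.mem_Icc] at hj
      rw [hEhE j hj.1 (by omega)]
  have hSp : Sp = h*(Eh M)^2 + ∑ j ∈ Finset.Icc 2 (M-1), h*(E j)^2 := by
    rw [hSpdef, sum_shift_up (fun j => h*(Eh j)^2) (M-1)]
    rw [show M-1+1 = M by omega]
    rw [show Finset.Icc 2 M = insert M (Finset.Icc 2 (M-1)) from by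
      ext x; simp only [Finset.mem_Icc, Finset.mem_insert]; omega]
    rw [Finset.sum_insert (by simp only [Finset.mem_Icc]; omega)]
    congr 1
    exact Finset.sum_congr rfl fun j hj => by
      rw [Finset.mem_Icc] at hj
      rw [hEhE j (by omega) hj.2]
  have hA1 : ∑ j ∈ Finset.Icc 1 (M-2), h*(E j)^2 ≤ NS := by
    rw [← hS0]
    apply Finset.sum_le_sum_of_subset_of_nonneg
    · apply Finset.Icc_subset_Icc_right; omega
    · intro i _ _; exact mul_nonneg hh.le (sq_nonneg _)
  have hA2 : NS = h*(E 1)^2 + ∑ j ∈ Finset.Icc 2 (M-1), h*(E j)^2 := by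
    rw [← hS0]
    rw [show Finset.Icc 1 (M-1) = insert 1 (Finset.Icc 2 (M-1)) from by
      ext x; simp only [Finset.mem_Icc, Finset.mem_insert]; omega]
    rw [Finset.sum_insert (by simp only [Finset.mem_Icc]; omega)]
  -- boundary bound
  have hb0 : (lam+r)*(Eh 0)^2 ≤ r*(E 1)^2 + lam*Y^2 :=
    bnd0 h lam r (Eh 0) (E 1) Y hh hr.le hlamr hEh0
  have main2 : (1-lam-2*r)*NS + (lam+r)*Sm + r*Sp ≤ NS + k*Y^2 + k*(h*DPM^2) := by
    have p1 : (lam+r)*Sm = h*((lam+r)*(Eh 0)^2)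
        + (lam+r)*(∑ j ∈ Finset.Icc 1 (M-2), h*(E j)^2) := by rw [hSm]; ring
    have p2 : (lam+r)*(∑ j ∈ Finset.Icc 1 (M-2), h*(E j)^2) ≤ (lam+r)*NS :=
      mul_le_mul_of_nonneg_left hA1 hb
    have p3 : h*((lam+r)*(Eh 0)^2) ≤ h*(r*(E 1)^2 + lam*Y^2) :=
      mul_le_mul_of_nonneg_left hb0 hh.le
    have p4 : h*(r*(E 1)^2 + lam*Y^2) = r*(h*(E 1)^2) + k*Y^2 := by
      rw [hk2]; ring
    have p6 : r*Sp = r*(h*(Eh M)^2) + r*(∑ j ∈ Finset.Icc 2 (M-1), h*(E j)^2) := by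
      rw [hSp]; ring
    have p7 : r*(h*(Eh M)^2) = k*(h*DPM^2) := by
      rw [hEhM, hk1]; ring
    have p8 : r*(∑ j ∈ Finset.Icc 2 (M-1), h*(E j)^2) = r*NS - r*(h*(E 1)^2) := by
      rw [hA2]; ring
    linarith only [p1, p2, p3, p4, p6, p7, p8]
  -- bound on SG
  have hSDd : ∑ i ∈ Finset.Icc 1 (M-1), h*(Dd i)^2 ≤ Cd*NS := by
    have hDd2 : ∀ i ∈ Finset.Icc 1 (M-1),
        h*(Dd i)^2 ≤ h*(2*D^2*(E i)^2 + 2*(L*C0)^2*(16*ψmax*(h*T0))^2) := by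
      intro i hi
      rw [Finset.mem_Icc] at hi
      apply mul_le_mul_of_nonneg_left _ hh.le
      have h1 := hDdbound i hi.1 hi.2
      have h2 : (Dd i)^2 ≤ (D*|E i| + L*C0*(16*ψmax*(h*T0)))^2 :=
        sq_le_sq_abs _ _ h1
      have h3 := two_sq_add (D*|E i|) (L*C0*(16*ψmax*(h*T0)))
      have h4 : (D*|E i|)^2 = D^2*(E i)^2 := by
        rw [mul_pow, sq_abs]
      linarith only [h2, h3, h4]
    calc ∑ i ∈ Finset.Icc 1 (M-1), h*(Dd i)^2
        ≤ ∑ i ∈ Finset.Icc 1 (M-1),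
            h*(2*D^2*(E i)^2 + 2*(L*C0)^2*(16*ψmax*(h*T0))^2) :=
          Finset.sum_le_sum hDd2
      _ = 2*D^2*(∑ i ∈ Finset.Icc 1 (M-1), h*(E i)^2)
          + ((M-1:ℕ):ℝ)*(h*(2*(L*C0)^2*(16*ψmax*(h*T0))^2)) := by
          calc ∑ i ∈ Finset.Icc 1 (M-1),
                h*(2*D^2*(E i)^2 + 2*(L*C0)^2*(16*ψmax*(h*T0))^2)
              = ∑ i ∈ Finset.Icc 1 (M-1),
                ((2*D^2)*(h*(E i)^2) + h*(2*(L*C0)^2*(16*ψmax*(h*T0))^2)) :=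
                Finset.sum_congr rfl fun i _ => by ring
            _ = _ := by
                rw [Finset.sum_add_distrib,
                  ← Finset.mul_sum (Finset.Icc 1 (M-1)) (fun i => h*(E i)^2) (2*D^2)]
                rw [Finset.sum_const, Nat.card_Icc, nsmul_eq_mul]
                norm_num
      _ ≤ Cd*NS := by
          rw [hS0]
          have q0 : ((M-1:ℕ):ℝ)*(h*(2*(L*C0)^2*(16*ψmax*(h*T0))^2))
              = (((M-1:ℕ):ℝ)*h)*(512*L^2*C0^2*ψmax^2*(h*T0)^2) := by ring
          have q1 : (((M-1:ℕ):ℝ)*h)*(512*L^2*C0^2*ψmax^2*(h*T0)^2)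
              ≤ adag*(512*L^2*C0^2*ψmax^2*(h*T0)^2) :=
            mul_le_mul_of_nonneg_right hM1h (by positivity)
          have q2 : adag*(512*L^2*C0^2*ψmax^2*(h*T0)^2)
              ≤ adag*(512*L^2*C0^2*ψmax^2*(adag*NS)) := by
            apply mul_le_mul_of_nonneg_left _ hadag.le
            exact mul_le_mul_of_nonneg_left hCS (by positivity)
          have q3 : 2*D^2*NS + adag*(512*L^2*C0^2*ψmax^2*(adag*NS)) = Cd*NS := by
            rw [hCddef]; ring
          linarith only [q0, q1, q2, q3]
  have hSG : SG ≤ 2*SDP + 2*(Cd*NS) := by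
    have h1 : ∀ i ∈ Finset.Icc 1 (M-1),
        h*(G i)^2 ≤ 2*(h*(DP i)^2) + 2*(h*(Dd i)^2) := by
      intro i _
      have h2 : (G i)^2 ≤ 2*(DP i)^2 + 2*(Dd i)^2 := by
        rw [hGdef]; exact two_sq_sub _ _
      calc h*(G i)^2 ≤ h*(2*(DP i)^2 + 2*(Dd i)^2) :=
            mul_le_mul_of_nonneg_left h2 hh.le
        _ = 2*(h*(DP i)^2) + 2*(h*(Dd i)^2) := by ring
    calc SG ≤ ∑ i ∈ Finset.Icc 1 (M-1), (2*(h*(DP i)^2) + 2*(h*(Dd i)^2)) := by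
          rw [hSGdef]; exact Finset.sum_le_sum h1
      _ = 2*(∑ i ∈ Finset.Icc 1 (M-1), h*(DP i)^2)
          + 2*(∑ i ∈ Finset.Icc 1 (M-1), h*(Dd i)^2) := by
          rw [Finset.sum_add_distrib,
            ← Finset.mul_sum (Finset.Icc 1 (M-1)) (fun i => h*(DP i)^2) (2:ℝ),
            ← Finset.mul_sum (Finset.Icc 1 (M-1)) (fun i => h*(Dd i)^2) (2:ℝ)]
      _ ≤ 2*SDP + 2*(Cd*NS) := by
          rw [hSDP0]
          have := hSDd
          linarith only [this]
  -- bound on Y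
  have hY2 : Y^2 ≤ 2*DP0^2 + CQ2*NS := by
    have d1 : DQ^2 ≤ (C1*(h*T0))^2 := sq_le_sq_abs _ _ hDQ
    have d2 : (C1*(h*T0))^2 = C1^2*(h*T0)^2 := by ring
    have d3 : C1^2*(h*T0)^2 ≤ C1^2*(adag*NS) :=
      mul_le_mul_of_nonneg_left hCS (by positivity)
    have d4 : Y^2 ≤ 2*DP0^2 + 2*DQ^2 := by
      rw [hYdef]; exact two_sq_add _ _
    have d5 : 2*(C1^2*(adag*NS)) = CQ2*NS := by rw [hCQ2def]; ring
    linarith only [d1, d2, d3, d4, d5]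
  -- final assembly
  have final1 : normSq h M (fun i => V n i - W n i)
      ≤ (1 + C*k)*NS + (C*k)*(SDP + DP0^2 + h*DPM^2) := by
    have hk1' : (0:ℝ) ≤ 1+k := by linarith
    have m1 : (1+k)*((1-lam-2*r)*NS + (lam+r)*Sm + r*Sp)
        ≤ (1+k)*(NS + k*Y^2 + k*(h*DPM^2)) :=
      mul_le_mul_of_nonneg_left main2 hk1'
    have hk2le : (1+k:ℝ) ≤ 2 := by linarith only [hk4]
    have hnn1 : (0:ℝ) ≤ 2*DP0^2 + CQ2*NS :=
      add_nonneg (by positivity) (mul_nonneg hCQ2nn hNSnn)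
    have hnn2 : (0:ℝ) ≤ 2*SDP + 2*(Cd*NS) := by
      have := mul_nonneg hCdnn hNSnn
      linarith only [hSDPnn, this]
    have hnn3 : (0:ℝ) ≤ h*DPM^2 := mul_nonneg hh.le (sq_nonneg _)
    have m2 : k*(1+k)*SG ≤ k*(1+k)*(2*SDP + 2*(Cd*NS)) :=
      mul_le_mul_of_nonneg_left hSG (mul_nonneg hk.le (by linarith only [hk.le]))
    have m3 : (1+k)*(k*Y^2) ≤ (1+k)*(k*(2*DP0^2 + CQ2*NS)) := by
      apply mul_le_mul_of_nonneg_left _ (by linarith only [hk.le])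
      exact mul_le_mul_of_nonneg_left hY2 hk.le
    have z1 : 0 ≤ k*NS := mul_nonneg hk.le hNSnn
    have z2 : 0 ≤ k*SDP := mul_nonneg hk.le hSDPnn
    have z3 : 0 ≤ k*DP0^2 := mul_nonneg hk.le (sq_nonneg _)
    have z4 : 0 ≤ k*(h*DPM^2) := mul_nonneg hk.le hnn3
    have z5 : 0 ≤ (k*CQ2)*NS := mul_nonneg (mul_nonneg hk.le hCQ2nn) hNSnn
    have w1 : (1+k)*(k*(2*DP0^2 + CQ2*NS)) ≤ 2*(k*(2*DP0^2 + CQ2*NS)) :=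
      mul_le_mul_of_nonneg_right hk2le (mul_nonneg hk.le hnn1)
    have w2 : k*(1+k)*(2*SDP + 2*(Cd*NS)) ≤ 2*(k*(2*SDP + 2*(Cd*NS))) := by
      have e : k*(1+k)*(2*SDP + 2*(Cd*NS)) = (1+k)*(k*(2*SDP + 2*(Cd*NS))) := by ring
      rw [e]
      exact mul_le_mul_of_nonneg_right hk2le (mul_nonneg hk.le hnn2)
    have w3 : (1+k)*(k*(h*DPM^2)) ≤ 2*(k*(h*DPM^2)) :=
      mul_le_mul_of_nonneg_right hk2le z4
    have e0 : (1+k)*(NS + k*Y^2 + k*(h*DPM^2)) + k*(1+k)*SG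
        = (1+k)*NS + (1+k)*(k*Y^2) + (1+k)*(k*(h*DPM^2)) + k*(1+k)*SG := by ring
    have v0 : C*(k*NS) = 5*(k*NS) + 4*((k*CQ2)*NS) + 4*((k*Cd)*NS) := by
      rw [hCdef]; ring
    have z6 : 0 ≤ (k*Cd)*NS := mul_nonneg (mul_nonneg hk.le hCdnn) hNSnn
    have v2 : 4*(k*DP0^2) ≤ C*(k*DP0^2) :=
      mul_le_mul_of_nonneg_right (by linarith only [hC5] : (4:ℝ) ≤ C) z3
    have v3 : 2*(k*(h*DPM^2)) ≤ C*(k*(h*DPM^2)) :=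
      mul_le_mul_of_nonneg_right (by linarith only [hC5] : (2:ℝ) ≤ C) z4
    have v4 : 4*(k*SDP) ≤ C*(k*SDP) :=
      mul_le_mul_of_nonneg_right (by linarith only [hC5] : (4:ℝ) ≤ C) z2
    linarith only [sum1, m1, m2, m3, w1, w2, w3, e0, v0, v2, v3, v4, z1, z5, z6]
  have h12 : (0:ℝ) < 1 - 2*k := by linarith only [hk4]
  have hCknn : 0 ≤ C*k := mul_nonneg (by linarith only [hC5]) hk.le
  have hfr1 : 1 + C*k ≤ (1 + C*k)/(1 - 2*k) := by
    rw [le_div_iff₀ h12]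
    have t : 0 ≤ (1 + C*k)*(2*k) :=
      mul_nonneg (by linarith only [hCknn]) (by linarith only [hk.le])
    linarith only [t]
  have hfr2 : C*k ≤ C*k/(1 - 2*k) := by
    rw [le_div_iff₀ h12]
    have t : 0 ≤ (C*k)*(2*k) := mul_nonneg hCknn (by linarith only [hk.le])
    linarith only [t]
  have hsumnn : 0 ≤ SDP + DP0^2 + h*DPM^2 :=
    add_nonneg (add_nonneg hSDPnn (sq_nonneg _)) (mul_nonneg hh.le (sq_nonneg _))
  calc normSq h M (fun i => V n i - W n i)
      ≤ (1 + C*k)*NS + (C*k)*(SDP + DP0^2 + h*DPM^2) := final1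
    _ ≤ ((1 + C*k)/(1 - 2*k))*NS + (C*k/(1 - 2*k))*(SDP + DP0^2 + h*DPM^2) := by
        have g1 := mul_le_mul_of_nonneg_right hfr1 hNSnn
        have g2 := mul_le_mul_of_nonneg_right hfr2 hsumnn
        linarith only [g1, g2]
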